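/- arXiv:2108.05992 — 2 statements merged into one kernel-verified Lean document; each statement's English description precedes it below -/
import Mathlib

section
/- Let P(z,w) be a nonconstant complex polynomial in two variables of degree d. If there exist two non-parallel complex lines in ℂ² on which P never vanishes, then there are at most d complex lines in ℂ² disjoint from the zero set of P. -/
/-- A complex line in `ℂ²` (points modeled as `Fin 2 → ℂ`). -/
def IsComplexLine (L : Set (Fin 2 → ℂ)) : Prop :=
  ∃ a v : Fin 2 → ℂ, v ≠ 0 ∧ L = {p | ∃ t : ℂ, p = a + t • v}

open MvPolynomial

namespace LineCountAux

noncomputable section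

abbrev MP := MvPolynomial (Fin 2) ℂ

def lineSet (a v : Fin 2 → ℂ) : Set (Fin 2 → ℂ) := {p | ∃ t : ℂ, p = a + t • v}

lemma vec_ext {p q : Fin 2 → ℂ} (h0 : p 0 = q 0) (h1 : p 1 = q 1) : p = q := by
  funext i; fin_cases i <;> assumption

lemma vec_ne_zero_iff {v : Fin 2 → ℂ} : v ≠ 0 ↔ v 0 ≠ 0 ∨ v 1 ≠ 0 := by
  constructor
  · intro h
    by_contra hc
    push_neg at hc
    exact h (vec_ext (by simpa using hc.1) (by simpa using hc.2))
  · rintro (h | h) rfl <;> simp at h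

lemma exists_smul_of_det_eq_zero {v u : Fin 2 → ℂ} (hv : v ≠ 0)
    (h : v 0 * u 1 - v 1 * u 0 = 0) : ∃ c : ℂ, u = c • v := by
  rcases vec_ne_zero_iff.mp hv with h0 | h1
  · refine ⟨u 0 / v 0, vec_ext (by rw [Pi.smul_apply, smul_eq_mul, div_mul_cancel₀ _ h0]) ?_⟩
    have : u 1 * v 0 = u 0 * v 1 := by linear_combination h
    simp only [Pi.smul_apply, smul_eq_mul]
    field_simp
    linear_combination this
  · refine ⟨u 1 / v 1, vec_ext ?_ (by rw [Pi.smul_apply, smul_eq_mul, div_mul_cancel₀ _ h1])⟩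
    have : u 0 * v 1 = u 1 * v 0 := by linear_combination -h
    simp only [Pi.smul_apply, smul_eq_mul]
    field_simp
    linear_combination this

/-- A one-variable "restriction to a line" ring hom. -/
def res (b u : Fin 2 → ℂ) : MP →+* Polynomial ℂ :=
  eval₂Hom Polynomial.C (fun i => Polynomial.C (b i) + Polynomial.C (u i) * Polynomial.X)

lemma eval_res (b u : Fin 2 → ℂ) (S : MP) (t : ℂ) :
    (res b u S).eval t = eval (b + t • u) S := by
  have h := MvPolynomial.eval₂_comp_left (Polynomial.evalRingHom t) Polynomial.C
      (fun i => Polynomial.C (b i) + Polynomial.C (u i) * Polynomial.X) S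
  have h2 : (Polynomial.evalRingHom t).comp Polynomial.C = RingHom.id ℂ := by
    ext r; simp
  simp only [res, coe_eval₂Hom]
  rw [show Polynomial.eval t (eval₂ Polynomial.C
      (fun i => Polynomial.C (b i) + Polynomial.C (u i) * Polynomial.X) S)
      = (Polynomial.evalRingHom t) (eval₂ Polynomial.C
      (fun i => Polynomial.C (b i) + Polynomial.C (u i) * Polynomial.X) S) from rfl]
  rw [h, h2, eval₂_id]
  have h3 : (⇑(Polynomial.evalRingHom t) ∘ fun i =>
      Polynomial.C (b i) + Polynomial.C (u i) * Polynomial.X) = b + t • u := by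
    funext i
    simp only [Function.comp_apply, Polynomial.coe_evalRingHom, Polynomial.eval_add,
      Polynomial.eval_mul, Polynomial.eval_C, Polynomial.eval_X, Pi.add_apply, Pi.smul_apply,
      smul_eq_mul]
    ring
  rw [h3]

lemma nonvanish_const {q : Polynomial ℂ} (h : ∀ t, q.eval t ≠ 0) :
    q = Polynomial.C (q.coeff 0) := by
  have hdeg : q.degree = 0 := by
    by_contra hdeg
    obtain ⟨z, hz⟩ := Complex.isAlgClosed.exists_root q hdeg
    exact h z hz
  have := Polynomial.eq_C_of_degree_le_zero hdeg.le
  exact this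

lemma eval_aeval' (g : Fin 2 → MP) (S : MP) (x : Fin 2 → ℂ) :
    eval x (aeval g S) = eval (fun i => eval x (g i)) S := by
  rw [aeval_def, MvPolynomial.algebraMap_eq, eval_eval₂]
  have h2 : (eval x).comp (C : ℂ →+* MP) = RingHom.id ℂ := by ext r; simp
  rw [h2, eval₂_id]

/-- substitute `X 1 := 0`. -/
def setZero : MP →ₐ[ℂ] MP := aeval (fun i => if i = 1 then 0 else X i)

lemma X_dvd_sub_setZero (S : MP) : (X 1 : MP) ∣ S - setZero S := by
  induction S using MvPolynomial.induction_on with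
  | C a => simp [setZero]
  | add p q hp hq =>
    have : p + q - setZero (p + q) = (p - setZero p) + (q - setZero q) := by
      rw [map_add]; ring
    rw [this]
    exact dvd_add hp hq
  | mul_X p i hp =>
    by_cases hi : i = 1
    · subst hi
      have : setZero (p * X 1) = 0 := by simp [setZero]
      rw [this, sub_zero]
      exact Dvd.intro_left p rfl
    · have h1 : setZero (p * X i) = setZero p * X i := by
        rw [map_mul]
        congr 1
        simp [setZero, hi]
      have : p * X i - setZero (p * X i) = (p - setZero p) * X i := by rw [h1]; ring
      rw [this]
      exact Dvd.dvd.mul_right hp _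

lemma X_dvd_of_vanish {S : MP} (h : ∀ p : Fin 2 → ℂ, p 1 = 0 → eval p S = 0) :
    (X 1 : MP) ∣ S := by
  have hτ : setZero S = 0 := by
    apply MvPolynomial.funext
    intro x
    rw [show (setZero S) = aeval (fun i => if i = 1 then 0 else X i) S from rfl, eval_aeval']
    rw [map_zero]
    apply h
    · simp
  have := X_dvd_sub_setZero S
  rwa [hτ, sub_zero] at this

lemma eq_C_of_totalDegree_eq_zero {f : MP} (h : f.totalDegree = 0) : f = C (coeff 0 f) := by
  ext d
  rw [MvPolynomial.coeff_C]
  by_cases hd : d = 0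
  · subst hd; simp
  · rw [if_neg (Ne.symm hd)]
    by_contra hc
    have hds : d ∈ f.support := by
      rw [MvPolynomial.mem_support_iff]; exact hc
    have := (MvPolynomial.totalDegree_eq_zero_iff (Fin 2) f).mp h d hds
    exact hd (Finsupp.ext this)

lemma top_component_ne_zero {f : MP} (hf : f ≠ 0) :
    homogeneousComponent f.totalDegree f ≠ 0 := by
  obtain ⟨d, hd, hdeg⟩ := Finset.exists_mem_eq_sup f.support
    (MvPolynomial.support_nonempty.mpr hf) (fun s => s.sum fun _ e => e)
  intro h0
  have hc := coeff_homogeneousComponent f.totalDegree f d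
  rw [h0] at hc
  have hdd : d.degree = f.totalDegree := by
    rw [Finsupp.degree, MvPolynomial.totalDegree, hdeg]
    simp [Finsupp.sum]
    rfl
  rw [if_pos hdd] at hc
  exact (MvPolynomial.mem_support_iff.mp hd) hc.symm

lemma lower_part (f : MP) :
    f - homogeneousComponent f.totalDegree f = 0 ∨
      (f - homogeneousComponent f.totalDegree f).totalDegree < f.totalDegree := by
  by_cases h0 : f.totalDegree = 0
  · left
    rw [h0, homogeneousComponent_zero, ← eq_C_of_totalDegree_eq_zero h0, sub_self]
  rcases eq_or_ne (f - homogeneousComponent f.totalDegree f) 0 with h | h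
  · exact Or.inl h
  right
  rw [MvPolynomial.totalDegree]
  rw [Finset.sup_lt_iff (by exact Nat.pos_of_ne_zero h0)]
  intro d hd
  have hcd : coeff d (f - homogeneousComponent f.totalDegree f) ≠ 0 :=
    MvPolynomial.mem_support_iff.mp hd
  rw [MvPolynomial.coeff_sub, coeff_homogeneousComponent] at hcd
  have hdd : d.degree = d.sum fun _ e => e := by simp [Finsupp.degree, Finsupp.sum]; rfl
  by_cases hdeg : d.degree = f.totalDegree
  · rw [if_pos hdeg, sub_self] at hcd; exact absurd rfl hcd
  · rw [if_neg hdeg, sub_zero] at hcd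
    have hds : d ∈ f.support := MvPolynomial.mem_support_iff.mpr hcd
    have hle : (d.sum fun _ e => e) ≤ f.totalDegree := MvPolynomial.le_totalDegree hds
    rw [← hdd] at hle ⊢
    exact lt_of_le_of_ne hle hdeg

lemma totalDegree_mul_eq {f g : MP} (hf : f ≠ 0) (hg : g ≠ 0) :
    (f * g).totalDegree = f.totalDegree + g.totalDegree := by
  refine le_antisymm (MvPolynomial.totalDegree_mul f g) ?_
  set df := f.totalDegree with hdf
  set dg := g.totalDegree with hdg
  set F := homogeneousComponent df f with hF
  set G := homogeneousComponent dg g with hG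
  have hFne : F ≠ 0 := top_component_ne_zero hf
  have hGne : G ≠ 0 := top_component_ne_zero hg
  have hFhom : F.IsHomogeneous df := homogeneousComponent_isHomogeneous df f
  have hGhom : G.IsHomogeneous dg := homogeneousComponent_isHomogeneous dg g
  have hsplit : f * g = F * G + (F * (g - G) + (f - F) * g) := by ring
  have hcross1 : homogeneousComponent (df + dg) (F * (g - G)) = 0 := by
    rcases lower_part g with h | h
    · rw [← hG] at h; rw [h, mul_zero, map_zero]
    · apply homogeneousComponent_eq_zero
      calc (F * (g - G)).totalDegree ≤ F.totalDegree + (g - G).totalDegree :=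
            MvPolynomial.totalDegree_mul _ _
        _ ≤ df + (g - G).totalDegree := by
            have := hFhom.totalDegree_le
            omega
        _ < df + dg := by rw [← hG] at h; omega
  have hcross2 : homogeneousComponent (df + dg) ((f - F) * g) = 0 := by
    rcases lower_part f with h | h
    · rw [← hF] at h; rw [h, zero_mul, map_zero]
    · apply homogeneousComponent_eq_zero
      calc ((f - F) * g).totalDegree ≤ (f - F).totalDegree + g.totalDegree :=
            MvPolynomial.totalDegree_mul _ _
        _ < df + dg := by rw [← hF] at h; omega
  have hmain : homogeneousComponent (df + dg) (f * g) = F * G := by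
    rw [hsplit, map_add, map_add, hcross1, hcross2, add_zero, add_zero]
    have hmem : F * G ∈ homogeneousSubmodule (Fin 2) ℂ (df + dg) :=
      (mem_homogeneousSubmodule (df + dg) (F * G)).mpr (hFhom.mul hGhom)
    rw [homogeneousComponent_of_mem hmem, if_pos rfl]
  by_contra hlt
  push_neg at hlt
  have h0 := homogeneousComponent_eq_zero (df + dg) (f * g) hlt
  rw [hmain] at h0
  exact (mul_ne_zero hFne hGne) h0

section CoV

variable (a v u : Fin 2 → ℂ)

def Ddet : ℂ := v 0 * u 1 - v 1 * u 0

def gA : Fin 2 → MP := fun i => C (a i) + C (v i) * X 0 + C (u i) * X 1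

def zB : MP :=
  C (u 1 / Ddet v u) * (X 0 - C (a 0)) - C (u 0 / Ddet v u) * (X 1 - C (a 1))

def wB : MP :=
  C (v 0 / Ddet v u) * (X 1 - C (a 1)) - C (v 1 / Ddet v u) * (X 0 - C (a 0))

def gB : Fin 2 → MP := ![zB a v u, wB a v u]

lemma eval_zB (x : Fin 2 → ℂ) :
    eval x (zB a v u) = (u 1 * (x 0 - a 0) - u 0 * (x 1 - a 1)) / Ddet v u := by
  simp only [zB, map_sub, map_mul, eval_C, eval_X]
  field_simp

lemma eval_wB (x : Fin 2 → ℂ) :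
    eval x (wB a v u) = (v 0 * (x 1 - a 1) - v 1 * (x 0 - a 0)) / Ddet v u := by
  simp only [wB, map_sub, map_mul, eval_C, eval_X]
  field_simp

lemma eval_gA (x : Fin 2 → ℂ) (i : Fin 2) :
    eval x (gA a v u i) = a i + x 0 * v i + x 1 * u i := by
  simp only [gA, map_add, map_mul, eval_C, eval_X]
  ring

variable {v u}

lemma key_pt (hD : Ddet v u ≠ 0) (x : Fin 2 → ℂ) :
    a + (eval x (zB a v u)) • v + (eval x (wB a v u)) • u = x := by
  have hD' : v 0 * u 1 - v 1 * u 0 ≠ 0 := hD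
  have hD'' : u 1 * v 0 - u 0 * v 1 ≠ 0 := by
    intro h; apply hD'; linear_combination h
  apply vec_ext <;>
  · simp only [Pi.add_apply, Pi.smul_apply, smul_eq_mul, eval_zB, eval_wB]
    rw [show Ddet v u = v 0 * u 1 - v 1 * u 0 from rfl]
    field_simp
    ring

lemma BA (hD : Ddet v u ≠ 0) (S : MP) :
    aeval (gB a v u) (aeval (gA a v u) S) = S := by
  apply MvPolynomial.funext
  intro x
  rw [eval_aeval', eval_aeval']
  have hpt : (fun i => eval (fun j => eval x (gB a v u j)) (gA a v u i)) = x := by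
    funext i
    rw [eval_gA]
    have h0 : eval x (gB a v u 0) = eval x (zB a v u) := by simp [gB]
    have h1 : eval x (gB a v u 1) = eval x (wB a v u) := by simp [gB]
    rw [h0, h1]
    have hk := congrFun (key_pt a hD x) i
    simp only [Pi.add_apply, Pi.smul_apply, smul_eq_mul] at hk
    exact hk
  rw [hpt]

end CoV

lemma exists_factor {S : MP} (hS : S ≠ 0) {a v : Fin 2 → ℂ} (hv : v ≠ 0)
    (h : ∀ t : ℂ, eval (a + t • v) S = 0) :
    ∃ ℓ S' : MP, S = ℓ * S' ∧ S' ≠ 0 ∧ S.totalDegree = S'.totalDegree + 1 ∧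
      ∀ p : Fin 2 → ℂ, eval p ℓ = 0 ↔ p ∈ lineSet a v := by
  obtain ⟨u, hD⟩ : ∃ u : Fin 2 → ℂ, Ddet v u ≠ 0 := by
    rcases vec_ne_zero_iff.mp hv with h0 | h1
    · exact ⟨fun j => if j = 0 then 0 else 1, by simp [Ddet, h0]⟩
    · exact ⟨fun j => if j = 0 then 1 else 0, by simp [Ddet, h1]⟩
  have hvan : ∀ p : Fin 2 → ℂ, p 1 = 0 → eval p (aeval (gA a v u) S) = 0 := by
    intro p hp1
    rw [eval_aeval']
    have hpt : (fun i => eval p (gA a v u i)) = a + (p 0) • v := by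
      funext i
      rw [eval_gA, hp1]
      simp [mul_comm]
    rw [hpt]
    exact h (p 0)
  obtain ⟨G, hG⟩ := X_dvd_of_vanish hvan
  have hfact : S = wB a v u * aeval (gB a v u) G := by
    have := BA a hD S
    rw [hG, map_mul] at this
    have hX1 : aeval (gB a v u) (X 1 : MP) = wB a v u := by simp [gB]
    rw [hX1] at this
    exact this.symm
  have hzero : ∀ p : Fin 2 → ℂ, eval p (wB a v u) = 0 ↔ p ∈ lineSet a v := by
    intro p
    constructor
    · intro hp
      refine ⟨eval p (zB a v u), ?_⟩
      have := key_pt a hD p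
      rw [hp, zero_smul, add_zero] at this
      exact this.symm
    · rintro ⟨t, rfl⟩
      rw [eval_wB]
      have h0 : (a + t • v) 0 - a 0 = t * v 0 := by
        simp only [Pi.add_apply, Pi.smul_apply, smul_eq_mul]; ring
      have h1 : (a + t • v) 1 - a 1 = t * v 1 := by
        simp only [Pi.add_apply, Pi.smul_apply, smul_eq_mul]; ring
      rw [h0, h1]
      rw [show v 0 * (t * v 1) - v 1 * (t * v 0) = 0 from by ring, zero_div]
  have hwne : wB a v u ≠ 0 := by
    intro h0
    have h1 : eval (a + u) (wB a v u) = 1 := by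
      rw [eval_wB]
      have e0 : (a + u) 0 - a 0 = u 0 := by simp
      have e1 : (a + u) 1 - a 1 = u 1 := by simp
      rw [e0, e1]
      rw [show v 0 * u 1 - v 1 * u 0 = Ddet v u from rfl, div_self hD]
    rw [h0] at h1
    simp at h1
  have hS'ne : aeval (gB a v u) G ≠ 0 := by
    intro h0
    rw [h0, mul_zero] at hfact
    exact hS hfact
  have hdegw : (wB a v u).totalDegree = 1 := by
    have hle : (wB a v u).totalDegree ≤ 1 := by
      rw [wB]
      refine le_trans (MvPolynomial.totalDegree_sub _ _) ?_
      rw [max_le_iff]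
      constructor <;>
      · refine le_trans (MvPolynomial.totalDegree_mul _ _) ?_
        rw [MvPolynomial.totalDegree_C, zero_add]
        refine le_trans (MvPolynomial.totalDegree_sub _ _) ?_
        simp [MvPolynomial.totalDegree_X]
    interval_cases hw : (wB a v u).totalDegree
    · exfalso
      have hC := eq_C_of_totalDegree_eq_zero hw
      have h1 : eval (a + u) (wB a v u) = 1 := by
        rw [eval_wB]
        have e0 : (a + u) 0 - a 0 = u 0 := by simp
        have e1 : (a + u) 1 - a 1 = u 1 := by simp
        rw [e0, e1]
        rw [show v 0 * u 1 - v 1 * u 0 = Ddet v u from rfl, div_self hD]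
      have h2 : eval a (wB a v u) = 0 := by
        rw [eval_wB]
        simp
      rw [hC] at h1 h2
      simp at h1 h2
      rw [h2] at h1
      exact one_ne_zero h1.symm
    · rfl
  refine ⟨wB a v u, aeval (gB a v u) G, hfact, hS'ne, ?_, hzero⟩
  rw [hfact, totalDegree_mul_eq hwne hS'ne, hdegw]
  ring

lemma line_subset {a v b u : Fin 2 → ℂ} (hv : v ≠ 0) (hu : u ≠ 0)
    (h : lineSet b u ⊆ lineSet a v) :
    (∃ c : ℂ, c ≠ 0 ∧ u = c • v) ∧ lineSet b u = lineSet a v := by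
  obtain ⟨t₀, ht₀⟩ := h (show b ∈ lineSet b u from ⟨0, by simp⟩)
  obtain ⟨t₁, ht₁⟩ := h (show b + u ∈ lineSet b u from ⟨1, by simp⟩)
  have hu' : u = (t₁ - t₀) • v := by
    have : b + u - b = (a + t₁ • v) - (a + t₀ • v) := by rw [← ht₀, ← ht₁]
    simpa [sub_smul] using this
  have hne : t₁ - t₀ ≠ 0 := by
    intro h0
    rw [h0, zero_smul] at hu'
    exact hu hu'
  refine ⟨⟨t₁ - t₀, hne, hu'⟩, Set.Subset.antisymm h ?_⟩
  rintro p ⟨s, rfl⟩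
  refine ⟨(s - t₀) / (t₁ - t₀), ?_⟩
  rw [hu', smul_smul, div_mul_cancel₀ _ hne, ht₀, sub_smul]
  abel

lemma lines_intersect {a b v u : Fin 2 → ℂ} (hD : Ddet v u ≠ 0) :
    ∃ s t : ℂ, a + s • v = b + t • u := by
  have hD' : v 0 * u 1 - v 1 * u 0 ≠ 0 := hD
  have hD'' : u 1 * v 0 - u 0 * v 1 ≠ 0 := by
    intro h; apply hD'; linear_combination h
  refine ⟨((b - a) 0 * u 1 - (b - a) 1 * u 0) / (v 0 * u 1 - v 1 * u 0),
    ((b - a) 0 * v 1 - (b - a) 1 * v 0) / (v 0 * u 1 - v 1 * u 0), ?_⟩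
  apply vec_ext <;>
  · simp only [Pi.add_apply, Pi.smul_apply, Pi.sub_apply, smul_eq_mul]
    field_simp
    ring

lemma const_on_line {S : MP} {b u : Fin 2 → ℂ} (h : ∀ t : ℂ, eval (b + t • u) S ≠ 0) (t : ℂ) :
    eval (b + t • u) S = eval b S := by
  have hq : ∀ s : ℂ, (res b u S).eval s ≠ 0 := by
    intro s
    rw [eval_res]
    exact h s
  have hC := nonvanish_const hq
  have h1 : eval (b + t • u) S = (res b u S).eval t := (eval_res b u S t).symm
  have h2 : eval b S = (res b u S).eval 0 := by
    rw [eval_res]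
    congr 1
    simp
  rw [h1, h2, hC]
  simp

lemma count_lines : ∀ (n : ℕ) (Q : MP), Q ≠ 0 → Q.totalDegree = n →
    {L : Set (Fin 2 → ℂ) | IsComplexLine L ∧ ∀ p ∈ L, eval p Q = 0}.Finite ∧
    {L : Set (Fin 2 → ℂ) | IsComplexLine L ∧ ∀ p ∈ L, eval p Q = 0}.ncard ≤ n := by
  intro n
  induction n using Nat.strong_induction_on with
  | _ n IH =>
    intro Q hQ hn
    rcases Set.eq_empty_or_nonempty
      {L : Set (Fin 2 → ℂ) | IsComplexLine L ∧ ∀ p ∈ L, eval p Q = 0} with hE | ⟨L, hL⟩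
    · rw [hE]
      simp
    · obtain ⟨⟨aL, vL, hvL, rfl⟩, hLv⟩ := hL
      have hvan : ∀ t : ℂ, eval (aL + t • vL) Q = 0 := fun t => hLv _ ⟨t, rfl⟩
      obtain ⟨ℓ, Q', hfact, hQ'ne, hdeg, hzero⟩ := exists_factor hQ hvL hvan
      have hsub : {L : Set (Fin 2 → ℂ) | IsComplexLine L ∧ ∀ p ∈ L, eval p Q = 0} ⊆
          insert (lineSet aL vL)
            {L : Set (Fin 2 → ℂ) | IsComplexLine L ∧ ∀ p ∈ L, eval p Q' = 0} := by
        rintro M ⟨⟨b, w, hw, rfl⟩, hMv⟩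
        have hres : res b w ℓ * res b w Q' = 0 := by
          rw [← map_mul, ← hfact]
          apply Polynomial.funext
          intro t
          rw [eval_res, Polynomial.eval_zero]
          exact hMv _ ⟨t, rfl⟩
        rcases mul_eq_zero.mp hres with h0 | h0
        · left
          have hsubl : lineSet b w ⊆ lineSet aL vL := by
            rintro p ⟨t, rfl⟩
            rw [← hzero]
            rw [← eval_res, h0, Polynomial.eval_zero]
          exact (line_subset hvL hw hsubl).2
        · right
          refine ⟨⟨b, w, hw, rfl⟩, ?_⟩
          rintro p ⟨t, rfl⟩
          rw [← eval_res, h0, Polynomial.eval_zero]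
      have hn' : Q'.totalDegree < n := by omega
      obtain ⟨hfin, hcard⟩ := IH Q'.totalDegree hn' Q' hQ'ne rfl
      constructor
      · exact ((hfin.insert _).subset hsub)
      · calc {L : Set (Fin 2 → ℂ) | IsComplexLine L ∧ ∀ p ∈ L, eval p Q = 0}.ncard
            ≤ (insert (lineSet aL vL)
              {L : Set (Fin 2 → ℂ) | IsComplexLine L ∧ ∀ p ∈ L, eval p Q' = 0}).ncard :=
              Set.ncard_le_ncard hsub (hfin.insert _)
          _ ≤ {L : Set (Fin 2 → ℂ) | IsComplexLine L ∧ ∀ p ∈ L, eval p Q' = 0}.ncard + 1 :=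
              Set.ncard_insert_le _ _
          _ ≤ n := by omega

end

end LineCountAux

open MvPolynomial LineCountAux in
theorem stmt_0 (P : MvPolynomial (Fin 2) ℂ) (d : ℕ) (hd : P.totalDegree = d)
    (hnc : ¬∃ c : ℂ, P = MvPolynomial.C c)
    (a₁ v₁ a₂ v₂ : Fin 2 → ℂ) (hv₁ : v₁ ≠ 0) (hv₂ : v₂ ≠ 0)
    (hpar : ¬∃ c : ℂ, v₂ = c • v₁)
    (h₁ : ∀ t : ℂ, MvPolynomial.eval (a₁ + t • v₁) P ≠ 0)
    (h₂ : ∀ t : ℂ, MvPolynomial.eval (a₂ + t • v₂) P ≠ 0) :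
    {L : Set (Fin 2 → ℂ) | IsComplexLine L ∧ ∀ p ∈ L, MvPolynomial.eval p P ≠ 0}.Finite ∧
    {L : Set (Fin 2 → ℂ) | IsComplexLine L ∧ ∀ p ∈ L, MvPolynomial.eval p P ≠ 0}.ncard ≤ d := by
  classical
  subst hd
  have hD21 : Ddet v₁ v₂ ≠ 0 := fun h => hpar (exists_smul_of_det_eq_zero hv₁ h)
  obtain ⟨s0, t0, hp₀⟩ := lines_intersect (a := a₁) (b := a₂) hD21
  set c : ℂ := eval (a₁ + s0 • v₁) P with hcdef
  have hc0 : c ≠ 0 := h₁ s0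
  have hconst1 : ∀ t : ℂ, eval (a₁ + t • v₁) P = c := by
    intro t
    rw [const_on_line h₁ t, hcdef, const_on_line h₁ s0]
  have hconst2 : ∀ t : ℂ, eval (a₂ + t • v₂) P = c := by
    intro t
    rw [const_on_line h₂ t, hcdef, hp₀, const_on_line h₂ t0]
  set R : MP := P - C c with hRdef
  have hRne : R ≠ 0 := by
    intro h0
    exact hnc ⟨c, by rwa [hRdef, sub_eq_zero] at h0⟩
  have hvan1 : ∀ t : ℂ, eval (a₁ + t • v₁) R = 0 := by
    intro t
    rw [hRdef, map_sub, eval_C, hconst1, sub_self]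
  obtain ⟨ℓ₁, G₁, hf1, hG₁ne, hdeg1, hz1⟩ := exists_factor hRne hv₁ hvan1
  have hvan2 : ∀ t : ℂ, eval (a₂ + t • v₂) R = 0 := by
    intro t
    rw [hRdef, map_sub, eval_C, hconst2, sub_self]
  have hres2 : res a₂ v₂ ℓ₁ * res a₂ v₂ G₁ = 0 := by
    rw [← map_mul, ← hf1]
    apply Polynomial.funext
    intro t
    rw [eval_res, Polynomial.eval_zero]
    exact hvan2 t
  rcases mul_eq_zero.mp hres2 with h0 | h0
  · exfalso
    have hsubl : lineSet a₂ v₂ ⊆ lineSet a₁ v₁ := by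
      rintro p ⟨t, rfl⟩
      rw [← hz1, ← eval_res, h0, Polynomial.eval_zero]
    obtain ⟨⟨cc, hccne, hcc⟩, -⟩ := line_subset hv₁ hv₂ hsubl
    exact hpar ⟨cc, hcc⟩
  have hvanG1 : ∀ t : ℂ, eval (a₂ + t • v₂) G₁ = 0 := by
    intro t
    rw [← eval_res, h0, Polynomial.eval_zero]
  obtain ⟨ℓ₂, Q, hf2, hQne, hdeg2, hz2⟩ := exists_factor hG₁ne hv₂ hvanG1
  have hdR : R.totalDegree ≤ P.totalDegree := by
    rw [hRdef]
    exact MvPolynomial.totalDegree_sub_C_le P c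
  have hdQ : Q.totalDegree + 2 ≤ P.totalDegree := by omega
  obtain ⟨hfinQ, hcardQ⟩ := count_lines Q.totalDegree Q hQne rfl
  have hsub : {L : Set (Fin 2 → ℂ) | IsComplexLine L ∧ ∀ p ∈ L, eval p P ≠ 0} ⊆
      insert (lineSet a₁ v₁) (insert (lineSet a₂ v₂)
        {L : Set (Fin 2 → ℂ) | IsComplexLine L ∧ ∀ p ∈ L, eval p Q = 0}) := by
    rintro M ⟨⟨b, w, hw, rfl⟩, hM⟩
    have hMne : ∀ t : ℂ, eval (b + t • w) P ≠ 0 := fun t => hM _ ⟨t, rfl⟩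
    set e : ℂ := eval b P with hedef
    have hconstM : ∀ t : ℂ, eval (b + t • w) P = e := fun t => const_on_line hMne t
    by_cases hec : e = c
    · have hresM : res b w ℓ₁ * (res b w ℓ₂ * res b w Q) = 0 := by
        rw [← map_mul, ← map_mul, ← hf2, ← hf1]
        apply Polynomial.funext
        intro t
        rw [eval_res, Polynomial.eval_zero, hRdef, map_sub, eval_C, hconstM, hec, sub_self]
      rcases mul_eq_zero.mp hresM with h1 | h1
      · left
        have hsubl : lineSet b w ⊆ lineSet a₁ v₁ := by
          rintro p ⟨t, rfl⟩
          rw [← hz1, ← eval_res, h1, Polynomial.eval_zero]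
        exact (line_subset hv₁ hw hsubl).2
      rcases mul_eq_zero.mp h1 with h2 | h2
      · right; left
        have hsubl : lineSet b w ⊆ lineSet a₂ v₂ := by
          rintro p ⟨t, rfl⟩
          rw [← hz2, ← eval_res, h2, Polynomial.eval_zero]
        exact (line_subset hv₂ hw hsubl).2
      · right; right
        refine ⟨⟨b, w, hw, rfl⟩, ?_⟩
        rintro p ⟨t, rfl⟩
        rw [← eval_res, h2, Polynomial.eval_zero]
    · exfalso
      have hresR : res b w R = Polynomial.C (e - c) := by
        apply Polynomial.funext
        intro t
        rw [eval_res, Polynomial.eval_C, hRdef, map_sub, eval_C, hconstM]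
      have hUnitR : IsUnit (res b w R) := by
        rw [hresR]
        exact Polynomial.isUnit_C.mpr (isUnit_iff_ne_zero.mpr (sub_ne_zero.mpr hec))
      have hsplitR : res b w R = res b w ℓ₁ * (res b w ℓ₂ * res b w Q) := by
        rw [← map_mul, ← map_mul, ← hf2, ← hf1]
      have hU1 : IsUnit (res b w ℓ₁) := isUnit_of_mul_isUnit_left (hsplitR ▸ hUnitR)
      have hU2 : IsUnit (res b w ℓ₂) := by
        have : IsUnit (res b w ℓ₂ * res b w Q) := isUnit_of_mul_isUnit_right (hsplitR ▸ hUnitR)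
        exact isUnit_of_mul_isUnit_left this
      have hpar1 : ∃ k : ℂ, w = k • v₁ := by
        by_contra hk
        have hDk : Ddet v₁ w ≠ 0 := fun h => hk (exists_smul_of_det_eq_zero hv₁ h)
        obtain ⟨s', t', hint⟩ := lines_intersect (a := a₁) (b := b) hDk
        have hmem : (b + t' • w) ∈ lineSet a₁ v₁ := ⟨s', hint.symm⟩
        have hz : eval (b + t' • w) ℓ₁ = 0 := (hz1 _).mpr hmem
        obtain ⟨r, hrU, hrC⟩ := Polynomial.isUnit_iff.mp hU1
        rw [← eval_res, ← hrC, Polynomial.eval_C] at hz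
        rw [hz] at hrU
        exact one_ne_zero (isUnit_zero_iff.mp hrU).symm
      have hpar2 : ∃ k : ℂ, w = k • v₂ := by
        by_contra hk
        have hDk : Ddet v₂ w ≠ 0 := fun h => hk (exists_smul_of_det_eq_zero hv₂ h)
        obtain ⟨s', t', hint⟩ := lines_intersect (a := a₂) (b := b) hDk
        have hmem : (b + t' • w) ∈ lineSet a₂ v₂ := ⟨s', hint.symm⟩
        have hz : eval (b + t' • w) ℓ₂ = 0 := (hz2 _).mpr hmem
        obtain ⟨r, hrU, hrC⟩ := Polynomial.isUnit_iff.mp hU2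
        rw [← eval_res, ← hrC, Polynomial.eval_C] at hz
        rw [hz] at hrU
        exact one_ne_zero (isUnit_zero_iff.mp hrU).symm
      obtain ⟨k, hk⟩ := hpar1
      obtain ⟨k', hk'⟩ := hpar2
      have hk'ne : k' ≠ 0 := by
        intro h0
        rw [h0, zero_smul] at hk'
        exact hw hk'
      refine hpar ⟨k'⁻¹ * k, ?_⟩
      rw [mul_smul, ← hk, hk', inv_smul_smul₀ hk'ne]
  refine ⟨((hfinQ.insert _).insert _).subset hsub, ?_⟩
  calc {L : Set (Fin 2 → ℂ) | IsComplexLine L ∧ ∀ p ∈ L, eval p P ≠ 0}.ncard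
      ≤ (insert (lineSet a₁ v₁) (insert (lineSet a₂ v₂)
        {L : Set (Fin 2 → ℂ) | IsComplexLine L ∧ ∀ p ∈ L, eval p Q = 0})).ncard :=
        Set.ncard_le_ncard hsub ((hfinQ.insert _).insert _)
    _ ≤ (insert (lineSet a₂ v₂)
        {L : Set (Fin 2 → ℂ) | IsComplexLine L ∧ ∀ p ∈ L, eval p Q = 0}).ncard + 1 :=
        Set.ncard_insert_le _ _
    _ ≤ {L : Set (Fin 2 → ℂ) | IsComplexLine L ∧ ∀ p ∈ L, eval p Q = 0}.ncard + 2 := by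
        have := Set.ncard_insert_le (lineSet a₂ v₂)
          {L : Set (Fin 2 → ℂ) | IsComplexLine L ∧ ∀ p ∈ L, eval p Q = 0}
        omega
    _ ≤ P.totalDegree := by omega
end

section
/- Let P be a nonconstant complex polynomial in two variables. Then either (i) at most finitely many complex lines in ℂ² are disjoint from the zero set of P, or (ii) there is a complex line L₀ such that P is constant on every line parallel to L₀, and every complex line not parallel to L₀ meets the zero set of P. -/
open Polynomial MvPolynomial in
private noncomputable def linP (P : MvPolynomial (Fin 2) ℂ) (a v : Fin 2 → ℂ) : Polynomial ℂ :=
  MvPolynomial.eval₂ Polynomial.C (fun i => Polynomial.C (a i) + Polynomial.C (v i) * Polynomial.X) P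

section Aux
open Polynomial MvPolynomial

private lemma linP_eval (P : MvPolynomial (Fin 2) ℂ) (a v : Fin 2 → ℂ) (t : ℂ) :
    (linP P a v).eval t = MvPolynomial.eval (a + t • v) P := by
  unfold linP
  have h := MvPolynomial.eval₂_comp_left (Polynomial.evalRingHom t) (Polynomial.C : ℂ →+* Polynomial ℂ)
    (fun i => Polynomial.C (a i) + Polynomial.C (v i) * Polynomial.X) P
  simp only [Polynomial.coe_evalRingHom] at h
  rw [h]
  have h1 : (Polynomial.evalRingHom t).comp (Polynomial.C : ℂ →+* Polynomial ℂ) = RingHom.id ℂ := by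
    ext x; simp
  rw [h1]
  have h2 : (Polynomial.eval t) ∘ (fun i => Polynomial.C (a i) + Polynomial.C (v i) * Polynomial.X)
      = fun i => (a + t • v) i := by
    funext i
    simp only [Function.comp_apply, Polynomial.eval_add, Polynomial.eval_C,
      Polynomial.eval_mul, Polynomial.eval_X, Pi.add_apply, Pi.smul_apply, smul_eq_mul]
    ring
  rw [h2, MvPolynomial.eval₂_id]

private lemma linP_const (P : MvPolynomial (Fin 2) ℂ) (a v : Fin 2 → ℂ)
    (h : ∀ t : ℂ, MvPolynomial.eval (a + t • v) P ≠ 0) :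
    ∀ t : ℂ, MvPolynomial.eval (a + t • v) P = MvPolynomial.eval a P ∧ MvPolynomial.eval a P ≠ 0 := by
  have hd : (linP P a v).degree = 0 := by
    by_contra hd
    obtain ⟨x, hx⟩ := IsAlgClosed.exists_root (linP P a v) hd
    exact h x (by rw [← linP_eval]; exact hx)
  have hc : linP P a v = Polynomial.C ((linP P a v).coeff 0) :=
    Polynomial.eq_C_of_degree_le_zero (le_of_eq hd)
  intro t
  have e0 : MvPolynomial.eval a P = (linP P a v).coeff 0 := by
    have := linP_eval P a v 0
    rw [hc] at this; simpa using this.symm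
  have et : MvPolynomial.eval (a + t • v) P = (linP P a v).coeff 0 := by
    have := linP_eval P a v t
    rw [hc] at this; simpa using this.symm
  refine ⟨by rw [et, e0], ?_⟩
  rw [e0, ← et]; exact h t

private noncomputable def dEv (t b : ℂ) : Polynomial (Polynomial ℂ) →+* ℂ :=
  (Polynomial.evalRingHom t).comp (Polynomial.mapRingHom (Polynomial.evalRingHom b))

private lemma dEv_eval₂ (P : MvPolynomial (Fin 2) ℂ) (g : Fin 2 → Polynomial (Polynomial ℂ)) (t b : ℂ) :
    dEv t b (MvPolynomial.eval₂ (Polynomial.C.comp Polynomial.C) g P)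
      = MvPolynomial.eval (fun i => dEv t b (g i)) P := by
  have h := MvPolynomial.eval₂_comp_left (dEv t b) (Polynomial.C.comp Polynomial.C) g P
  rw [h]
  have h1 : (dEv t b).comp (Polynomial.C.comp Polynomial.C) = RingHom.id ℂ := by
    ext x; simp [dEv]
  rw [h1, MvPolynomial.eval₂_id]
  rfl

private lemma keyB (F : Polynomial (Polynomial ℂ))
    (hS : {b : ℂ | ∀ t : ℂ, dEv t b F = dEv 0 b F}.Infinite) :
    ∀ b t : ℂ, dEv t b F = dEv 0 b F := by
  have hcoeff : ∀ k : ℕ, 1 ≤ k → F.coeff k = 0 := by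
    intro k hk
    apply Polynomial.eq_zero_of_infinite_isRoot
    apply hS.mono
    intro b hb
    have hmap : F.map (Polynomial.evalRingHom b) = Polynomial.C ((F.map (Polynomial.evalRingHom b)).eval 0) := by
      apply Polynomial.funext
      intro r
      have := hb r
      simp only [dEv, RingHom.comp_apply, Polynomial.coe_mapRingHom] at this
      simpa using this
    have : (F.map (Polynomial.evalRingHom b)).coeff k = 0 := by
      rw [hmap, Polynomial.coeff_C, if_neg (by omega : k ≠ 0)]
    rw [Polynomial.coeff_map] at this
    exact this
  intro b t
  simp only [dEv, RingHom.comp_apply, Polynomial.coe_mapRingHom]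
  have : F.map (Polynomial.evalRingHom b) = Polynomial.C ((F.coeff 0).eval b) := by
    apply Polynomial.ext
    intro n
    rcases Nat.eq_zero_or_pos n with h0 | h0
    · subst h0; simp [Polynomial.coeff_map]
    · rw [Polynomial.coeff_map, hcoeff n h0, Polynomial.coeff_C]
      simp [Nat.pos_iff_ne_zero.mp h0]
  rw [this]; simp

private noncomputable def FS (P : MvPolynomial (Fin 2) ℂ) (m : ℂ) : Polynomial (Polynomial ℂ) :=
  MvPolynomial.eval₂ (Polynomial.C.comp Polynomial.C)
    ![Polynomial.X, Polynomial.C (Polynomial.C m) * Polynomial.X + Polynomial.C Polynomial.X] P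

private lemma dEv_FS (P : MvPolynomial (Fin 2) ℂ) (m t b : ℂ) :
    dEv t b (FS P m) = MvPolynomial.eval ![t, m * t + b] P := by
  rw [FS, dEv_eval₂]
  have e : (fun i => dEv t b
      (![Polynomial.X, Polynomial.C (Polynomial.C m) * Polynomial.X + Polynomial.C Polynomial.X] i))
      = ![t, m * t + b] := by
    funext i; fin_cases i <;> simp [dEv]
  rw [e]

private noncomputable def FV (P : MvPolynomial (Fin 2) ℂ) : Polynomial (Polynomial ℂ) :=
  MvPolynomial.eval₂ (Polynomial.C.comp Polynomial.C) ![Polynomial.C Polynomial.X, Polynomial.X] P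

private lemma dEv_FV (P : MvPolynomial (Fin 2) ℂ) (t b : ℂ) :
    dEv t b (FV P) = MvPolynomial.eval ![b, t] P := by
  rw [FV, dEv_eval₂]
  have e : (fun i => dEv t b (![Polynomial.C Polynomial.X, Polynomial.X] i)) = ![b, t] := by
    funext i; fin_cases i <;> simp [dEv]
  rw [e]

private lemma inv_slope (P : MvPolynomial (Fin 2) ℂ) (m : ℂ)
    (hS : {b : ℂ | ∀ t : ℂ, MvPolynomial.eval ![t, m * t + b] P = MvPolynomial.eval ![(0:ℂ), b] P}.Infinite) :
    ∀ (b : Fin 2 → ℂ) (t : ℂ), MvPolynomial.eval (b + t • ![1, m]) P = MvPolynomial.eval b P := by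
  have h := keyB (FS P m) (by
    apply hS.mono
    intro b hb t
    rw [dEv_FS, dEv_FS]
    have := hb t
    simpa using this)
  intro b t
  have e1 : b + t • ![1, m] = ![b 0 + t, m * (b 0 + t) + (b 1 - m * b 0)] := by
    funext i; fin_cases i <;> simp <;> ring
  have e2 : b = ![b 0 + 0, m * (b 0 + 0) + (b 1 - m * b 0)] := by
    funext i; fin_cases i <;> simp <;> ring
  rw [e1]
  conv_rhs => rw [e2]
  rw [← dEv_FS, ← dEv_FS, h (b 1 - m * b 0) (b 0 + t), h (b 1 - m * b 0) (b 0 + 0)]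

private lemma inv_vert (P : MvPolynomial (Fin 2) ℂ)
    (hS : {b : ℂ | ∀ t : ℂ, MvPolynomial.eval ![b, t] P = MvPolynomial.eval ![b, 0] P}.Infinite) :
    ∀ (b : Fin 2 → ℂ) (t : ℂ), MvPolynomial.eval (b + t • ![0, 1]) P = MvPolynomial.eval b P := by
  have h := keyB (FV P) (by
    apply hS.mono
    intro b hb t
    rw [dEv_FV, dEv_FV]
    exact hb t)
  intro b t
  have e1 : b + t • ![0, 1] = ![b 0, b 1 + t] := by
    funext i; fin_cases i <;> simp
  have e2 : b = ![b 0, b 1 + 0] := by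
    funext i; fin_cases i <;> simp
  rw [e1]
  conv_rhs => rw [e2]
  rw [← dEv_FV, ← dEv_FV, h (b 0) (b 1 + t), h (b 0) (b 1 + 0)]

private lemma rightDisj (P : MvPolynomial (Fin 2) ℂ) (hnc : ¬∃ c : ℂ, P = MvPolynomial.C c)
    (v : Fin 2 → ℂ) (hv : v ≠ 0)
    (hinv : ∀ (b : Fin 2 → ℂ) (t : ℂ), MvPolynomial.eval (b + t • v) P = MvPolynomial.eval b P) :
    ∀ b w : Fin 2 → ℂ, w ≠ 0 → (¬∃ c : ℂ, w = c • v) →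
      ∃ t : ℂ, MvPolynomial.eval (b + t • w) P = 0 := by
  intro b w hw hnp
  by_contra hno
  push_neg at hno
  have hconst := linP_const P b w hno
  set δ : ℂ := v 0 * w 1 - v 1 * w 0 with hδ
  have hδ0 : δ ≠ 0 := by
    intro h0
    apply hnp
    obtain ⟨i, hi⟩ := Function.ne_iff.mp hv
    have hvw : v 0 * w 1 = v 1 * w 0 := by linear_combination h0
    fin_cases i
    · have hv0 : v 0 ≠ 0 := by simpa using hi
      refine ⟨w 0 / v 0, ?_⟩
      funext j; fin_cases j
      · simp only [Fin.mk_zero, Fin.mk_one, Fin.isValue, Pi.smul_apply, smul_eq_mul]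
        rw [div_mul_cancel₀ _ hv0]
      · simp only [Fin.mk_zero, Fin.mk_one, Fin.isValue, Pi.smul_apply, smul_eq_mul]
        rw [div_mul_eq_mul_div, eq_div_iff hv0]
        linear_combination hvw
    · have hv1 : v 1 ≠ 0 := by simpa using hi
      refine ⟨w 1 / v 1, ?_⟩
      funext j; fin_cases j
      · simp only [Fin.mk_zero, Fin.mk_one, Fin.isValue, Pi.smul_apply, smul_eq_mul]
        rw [div_mul_eq_mul_div, eq_div_iff hv1]
        linear_combination -hvw
      · simp only [Fin.mk_zero, Fin.mk_one, Fin.isValue, Pi.smul_apply, smul_eq_mul]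
        rw [div_mul_cancel₀ _ hv1]
  apply hnc
  refine ⟨MvPolynomial.eval b P, ?_⟩
  apply MvPolynomial.funext
  intro x
  set t : ℂ := (v 0 * (x 1 - b 1) - v 1 * (x 0 - b 0)) / δ with ht
  set s : ℂ := (w 1 * (x 0 - b 0) - w 0 * (x 1 - b 1)) / δ with hs
  have hx : x = (b + t • w) + s • v := by
    funext j; fin_cases j <;>
    · simp only [Pi.add_apply, Pi.smul_apply, smul_eq_mul, ht, hs, Fin.zero_eta, Fin.mk_one, Fin.isValue]
      field_simp
      rw [hδ]; ring
  rw [hx, hinv (b + t • w) s, (hconst t).1]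
  simp

private def Ls (m b : ℂ) : Set (Fin 2 → ℂ) := {p | ∃ t : ℂ, p = ![0, b] + t • ![1, m]}
private def Lv (c : ℂ) : Set (Fin 2 → ℂ) := {p | ∃ t : ℂ, p = ![c, 0] + t • ![0, 1]}

private lemma ptS (m b t : ℂ) : ![(0:ℂ), b] + t • ![1, m] = ![t, m * t + b] := by
  funext j; fin_cases j
  · simp
  · simp; ring

private lemma ptV (c t : ℂ) : ![c, (0:ℂ)] + t • ![0, 1] = ![c, t] := by
  funext j; fin_cases j <;> simp

end Aux

section Aux2
open Polynomial MvPolynomial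

private lemma canon (L : Set (Fin 2 → ℂ)) (hL : IsComplexLine L) :
    (∃ m b : ℂ, L = Ls m b) ∨ (∃ c : ℂ, L = Lv c) := by
  obtain ⟨a, v, hv, rfl⟩ := hL
  by_cases h0 : v 0 = 0
  · right
    have h1 : v 1 ≠ 0 := by
      intro h1; apply hv; funext j; fin_cases j <;> simp [h0, h1]
    refine ⟨a 0, ?_⟩
    ext p
    constructor
    · rintro ⟨t, rfl⟩
      refine ⟨a 1 + t * v 1, ?_⟩
      funext j; fin_cases j <;> simp [h0]
    · rintro ⟨s, rfl⟩
      refine ⟨(s - a 1) / v 1, ?_⟩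
      funext j; fin_cases j <;> simp [h0]
      field_simp
      ring
  · left
    refine ⟨v 1 / v 0, a 1 - v 1 / v 0 * a 0, ?_⟩
    ext p
    constructor
    · rintro ⟨t, rfl⟩
      refine ⟨a 0 + t * v 0, ?_⟩
      funext j; fin_cases j
      · simp
      · simp; field_simp; ring
    · rintro ⟨s, rfl⟩
      refine ⟨(s - a 0) / v 0, ?_⟩
      funext j; fin_cases j
      · simp; field_simp; ring
      · simp; field_simp; ring

end Aux2

open Polynomial MvPolynomial in
theorem stmt_2 (P : MvPolynomial (Fin 2) ℂ) (hnc : ¬∃ c : ℂ, P = MvPolynomial.C c) :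
    {L : Set (Fin 2 → ℂ) | IsComplexLine L ∧ ∀ p ∈ L, MvPolynomial.eval p P ≠ 0}.Finite ∨
    ∃ v : Fin 2 → ℂ, v ≠ 0 ∧
      (∀ (b : Fin 2 → ℂ) (t : ℂ), MvPolynomial.eval (b + t • v) P = MvPolynomial.eval b P) ∧
      (∀ b w : Fin 2 → ℂ, w ≠ 0 → (¬∃ c : ℂ, w = c • v) →
        ∃ t : ℂ, MvPolynomial.eval (b + t • w) P = 0) := by
  set Missing := {L : Set (Fin 2 → ℂ) | IsComplexLine L ∧ ∀ p ∈ L, MvPolynomial.eval p P ≠ 0}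
    with hMissing
  by_cases hfin : Missing.Finite
  · exact Or.inl hfin
  right
  set B1 : Set (ℂ × ℂ) := {x | Ls x.1 x.2 ∈ Missing} with hB1def
  set B2 : Set ℂ := {c | Lv c ∈ Missing} with hB2def
  -- constancy on members
  have hB1c : ∀ m b : ℂ, (m, b) ∈ B1 →
      (∀ t : ℂ, MvPolynomial.eval ![t, m * t + b] P = MvPolynomial.eval ![(0:ℂ), b] P) := by
    intro m b hmb t
    have hnz : ∀ s : ℂ, MvPolynomial.eval (![(0:ℂ), b] + s • ![1, m]) P ≠ 0 :=
      fun s => hmb.2 _ ⟨s, rfl⟩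
    have := (linP_const P ![0, b] ![1, m] hnz t).1
    rwa [ptS] at this
  have hB2c : ∀ c : ℂ, c ∈ B2 →
      (∀ t : ℂ, MvPolynomial.eval ![c, t] P = MvPolynomial.eval ![c, (0:ℂ)] P) := by
    intro c hc t
    have hnz : ∀ s : ℂ, MvPolynomial.eval (![c, (0:ℂ)] + s • ![0, 1]) P ≠ 0 :=
      fun s => hc.2 _ ⟨s, rfl⟩
    have := (linP_const P ![c, 0] ![0, 1] hnz t).1
    rwa [ptV] at this
  -- one of B1, B2 is infinite
  have hBig : B1.Infinite ∨ B2.Infinite := by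
    by_contra hcon
    push_neg at hcon
    apply hfin
    have hsub : Missing ⊆ ((fun x : ℂ × ℂ => Ls x.1 x.2) '' B1) ∪ (Lv '' B2) := by
      intro L hL
      rcases canon L hL.1 with ⟨m, b, rfl⟩ | ⟨c, rfl⟩
      · exact Or.inl ⟨(m, b), hL, rfl⟩
      · exact Or.inr ⟨c, hL, rfl⟩
    exact ((hcon.1.image _).union (hcon.2.image _)).subset hsub
  rcases hBig with hB1 | hB2
  · -- slopes case
    by_cases hfib : ∃ m : ℂ, {b : ℂ | (m, b) ∈ B1}.Infinite
    · obtain ⟨m, hm⟩ := hfib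
      have hv : (![1, m] : Fin 2 → ℂ) ≠ 0 := by
        intro h; have := congrFun h 0; simp at this
      have hinv := inv_slope P m (hm.mono (fun b hb => hB1c m b hb))
      exact ⟨![1, m], hv, hinv, rightDisj P hnc _ hv hinv⟩
    · exfalso
      push_neg at hfib
      set M : Set ℂ := Prod.fst '' B1 with hMdef
      have hM : M.Infinite := by
        intro hMf
        apply hB1
        have hsub : B1 ⊆ ⋃ m ∈ M, (fun b => (m, b)) '' {b : ℂ | (m, b) ∈ B1} := by
          rintro ⟨m, b⟩ hx
          exact Set.mem_biUnion ⟨(m, b), hx, rfl⟩ ⟨b, hx, rfl⟩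
        exact (hMf.biUnion (fun m _ => (hfib m).image _)).subset hsub
      -- choose offsets
      have hchoice : ∀ m ∈ M, ∃ b : ℂ, (m, b) ∈ B1 := by
        rintro m ⟨⟨m', b⟩, hx, rfl⟩
        exact ⟨b, hx⟩
      choose! bf hbf using hchoice
      obtain ⟨m0, hm0⟩ := hM.nonempty
      set c0 : ℂ := MvPolynomial.eval ![(0:ℂ), bf m0] P with hc0
      -- all lines have the same constant value c0
      have hval : ∀ m ∈ M, MvPolynomial.eval ![(0:ℂ), bf m] P = c0 := by
        intro m hm
        by_cases hmm : m = m0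
        · rw [hmm]
        · have hne : m - m0 ≠ 0 := sub_ne_zero.mpr hmm
          set τ : ℂ := (bf m0 - bf m) / (m - m0) with hτ
          have e1 := hB1c m (bf m) (hbf m hm) τ
          have e2 := hB1c m0 (bf m0) (hbf m0 hm0) τ
          have epts : ![τ, m * τ + bf m] = ![τ, m0 * τ + bf m0] := by
            funext j; fin_cases j
            · simp
            · simp only [Fin.mk_one, Fin.isValue, Matrix.cons_val_one, Matrix.head_cons]
              rw [hτ]
              field_simp
              ring
          rw [← e1, epts, e2]
      -- a point where P ≠ c0
      have hq : ∃ q : Fin 2 → ℂ, MvPolynomial.eval q P ≠ c0 := by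
        by_contra hq
        push_neg at hq
        exact hnc ⟨c0, MvPolynomial.funext (fun x => by rw [hq x]; simp)⟩
      obtain ⟨q, hqne⟩ := hq
      have hqeta : ![q 0, q 1] = q := by funext j; fin_cases j <;> simp
      -- first auxiliary polynomial: vertical line through q
      set r1 : Polynomial ℂ := linP P ![q 0, 0] ![0, 1] - Polynomial.C c0 with hr1
      have hr1eval : ∀ y : ℂ, r1.eval y = MvPolynomial.eval ![q 0, y] P - c0 := by
        intro y
        rw [hr1]
        simp only [Polynomial.eval_sub, Polynomial.eval_C]
        rw [linP_eval, ptV]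
      have hr1ne : r1 ≠ 0 := by
        intro h
        have := hr1eval (q 1)
        rw [h, hqeta] at this
        simp only [Polynomial.eval_zero] at this
        exact hqne (sub_eq_zero.mp this.symm)
      have hR1 : {y : ℂ | r1.IsRoot y}.Finite := by
        rw [← Set.not_infinite]
        intro hinf
        exact hr1ne (Polynomial.eq_zero_of_infinite_isRoot r1 hinf)
      set ψ : ℂ → ℂ := fun m => m * q 0 + bf m with hψ
      have hψmem : ∀ m ∈ M, ψ m ∈ {y : ℂ | r1.IsRoot y} := by
        intro m hm
        have h1 := hB1c m (bf m) (hbf m hm) (q 0)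
        show r1.IsRoot (ψ m)
        unfold Polynomial.IsRoot
        rw [hr1eval, hψ]
        simp only
        rw [h1, hval m hm]
        ring
      -- pigeonhole: a point p where infinitely many lines pass
      have hpigeon : ∃ y0 : ℂ, {m ∈ M | ψ m = y0}.Infinite := by
        by_contra hno
        push_neg at hno
        apply hM
        have hsub : M ⊆ ⋃ y ∈ {y : ℂ | r1.IsRoot y}, {m ∈ M | ψ m = y} := by
          intro m hm
          exact Set.mem_biUnion (hψmem m hm) ⟨hm, rfl⟩
        exact (hR1.biUnion (fun y _ => hno y)).subset hsub
      obtain ⟨y0, hM'⟩ := hpigeon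
      have hq1y0 : q 1 ≠ y0 := by
        intro h
        obtain ⟨m, hmM, hmy⟩ := hM'.nonempty
        have hroot : r1.eval y0 = 0 := by
          have := hψmem m hmM
          rw [hmy] at this
          exact this
        rw [hr1eval] at hroot
        apply hqne
        rw [← hqeta, h]
        exact sub_eq_zero.mp hroot
      -- second auxiliary polynomial: horizontal line through q
      set r2 : Polynomial ℂ := linP P ![0, q 1] ![1, 0] - Polynomial.C c0 with hr2
      have hr2eval : ∀ y : ℂ, r2.eval y = MvPolynomial.eval ![y, q 1] P - c0 := by
        intro y
        rw [hr2]
        simp only [Polynomial.eval_sub, Polynomial.eval_C]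
        rw [linP_eval]
        have hpt : (![0, q 1] + y • ![1, 0] : Fin 2 → ℂ) = ![y, q 1] := by
          funext j; fin_cases j <;> simp
        rw [hpt]
      have hr2ne : r2 ≠ 0 := by
        intro h
        have := hr2eval (q 0)
        rw [h, hqeta] at this
        simp only [Polynomial.eval_zero] at this
        exact hqne (sub_eq_zero.mp this.symm)
      have hR2 : {y : ℂ | r2.IsRoot y}.Finite := by
        rw [← Set.not_infinite]
        intro hinf
        exact hr2ne (Polynomial.eq_zero_of_infinite_isRoot r2 hinf)
      set M'' : Set ℂ := {m ∈ M | ψ m = y0} \ {0} with hM''def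
      have hM''inf : M''.Infinite := hM'.diff (Set.finite_singleton 0)
      set f : ℂ → ℂ := fun m => (q 1 - bf m) / m with hf
      have hline : ∀ m ∈ M'', m * f m + bf m = q 1 := by
        rintro m ⟨hm1, hm2⟩
        have hm0 : m ≠ 0 := by simpa using hm2
        rw [hf]
        field_simp
        ring
      have himg : ∀ m ∈ M'', f m ∈ {y : ℂ | r2.IsRoot y} := by
        intro m hm
        have h1 := hB1c m (bf m) (hbf m hm.1.1) (f m)
        show r2.IsRoot (f m)
        unfold Polynomial.IsRoot
        rw [hr2eval]
        have hpt : ![f m, q 1] = ![f m, m * f m + bf m] := by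
          rw [hline m hm]
        rw [hpt, h1, hval m hm.1.1]
        ring
      have hinj : Set.InjOn f M'' := by
        intro m hm m' hm' hfe
        have e1 : m * (f m - q 0) = q 1 - y0 := by
          have h1 := hline m hm
          have h2 : m * q 0 + bf m = y0 := hm.1.2
          linear_combination h1 - h2
        have e2 : m' * (f m - q 0) = q 1 - y0 := by
          have h1 := hline m' hm'
          have h2 : m' * q 0 + bf m' = y0 := hm'.1.2
          rw [hfe]
          linear_combination h1 - h2
        have hne : f m - q 0 ≠ 0 := by
          intro h
          rw [h, mul_zero] at e1
          exact hq1y0 (by linear_combination -e1)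
        exact mul_right_cancel₀ hne (e1.trans e2.symm)
      apply hM''inf
      exact Set.Finite.of_finite_image (hR2.subset (by
        rintro y ⟨m, hm, rfl⟩
        exact himg m hm)) hinj
  · -- vertical case
    have hv : (![0, 1] : Fin 2 → ℂ) ≠ 0 := by
      intro h; have := congrFun h 1; simp at this
    have hinv := inv_vert P (hB2.mono (fun c hc => hB2c c hc))
    exact ⟨![0, 1], hv, hinv, rightDisj P hnc _ hv hinv⟩
end
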